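/- If p - p' < √(p') for every prime p ≥ 131 (p' the previous prime before p), then for every positive integer m with m² > 131, the interval (m², (m+1)²) contains at least two primes. -/
import Mathlib


def PrevPrime (p p' : ℕ) : Prop :=
  p'.Prime ∧ p' < p ∧ ∀ r : ℕ, r.Prime → r < p → r ≤ p'

theorem stmt11
    (h : ∀ p p' : ℕ, p.Prime → 131 ≤ p → PrevPrime p p' → (p : ℝ) - p' < Real.sqrt p') :
    ∀ m : ℕ, 1 ≤ m → 131 < m ^ 2 →
      ∃ r s : ℕ, r.Prime ∧ s.Prime ∧ r ≠ s ∧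
        m ^ 2 < r ∧ r < (m + 1) ^ 2 ∧ m ^ 2 < s ∧ s < (m + 1) ^ 2 := by
  intro m hm1 hm2
  classical
  obtain ⟨p0, hp0ge, hp0prime⟩ := Nat.exists_infinite_primes (m ^ 2 + m + 1)
  have hex : ∃ q, q.Prime ∧ m ^ 2 + m < q := ⟨p0, hp0prime, by omega⟩
  set P := Nat.find hex with hPdef
  obtain ⟨hPp, hPgt⟩ := Nat.find_spec hex
  have hPmin : ∀ q, q.Prime → m ^ 2 + m < q → P ≤ q :=
    fun q hq hq2 => Nat.find_min' hex ⟨hq, hq2⟩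
  have hPbig : m ^ 2 + m + 1 ≤ P := hPgt
  have hmsq : 131 < m ^ 2 := hm2
  set Q := Nat.findGreatest Nat.Prime (P - 1) with hQdef
  have hQle : Q ≤ P - 1 := Nat.findGreatest_le _
  have hQprime : Q.Prime := Nat.findGreatest_spec (m := 2) (by omega) Nat.prime_two
  have hQmax : ∀ r : ℕ, r.Prime → r < P → r ≤ Q :=
    fun r hr hrP => Nat.le_findGreatest (by omega) hr
  have hprev : PrevPrime P Q := ⟨hQprime, by omega, hQmax⟩
  have hgap : (P : ℝ) - Q < Real.sqrt Q := h P Q hPp (by omega) hprev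
  have hQgt : m ^ 2 < Q := by
    by_contra hle
    push_neg at hle
    have hs : Real.sqrt Q ≤ m := by
      rw [show ((m : ℝ)) = Real.sqrt ((m : ℝ) ^ 2) by
        rw [Real.sqrt_sq (by positivity)]]
      exact Real.sqrt_le_sqrt (by exact_mod_cast hle.trans_eq (by push_cast; ring))
    have h1 : (m : ℝ) ^ 2 + m + 1 ≤ (P : ℝ) := by exact_mod_cast hPbig
    have h2 : (Q : ℝ) ≤ (m : ℝ) ^ 2 := by exact_mod_cast hle
    linarith
  have hQle2 : Q ≤ m ^ 2 + m := by
    by_contra hgt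
    push_neg at hgt
    have := hPmin Q hQprime hgt
    omega
  have hs2 : Real.sqrt Q < m + 1 := by
    have : (Q : ℝ) < ((m : ℝ) + 1) ^ 2 := by
      have : (Q : ℝ) ≤ (m : ℝ) ^ 2 + m := by exact_mod_cast hQle2
      nlinarith
    calc Real.sqrt Q < Real.sqrt (((m : ℝ) + 1) ^ 2) := by
          apply Real.sqrt_lt_sqrt (by positivity) this
      _ = (m : ℝ) + 1 := Real.sqrt_sq (by positivity)
  have hPlt : (P : ℝ) < (Q : ℝ) + m + 1 := by linarith
  have hPltn : P < Q + m + 1 := by exact_mod_cast hPlt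
  refine ⟨Q, P, hQprime, hPp, by omega, hQgt, by nlinarith, by omega, by nlinarith⟩
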